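/- Transience of the form equals transience of the semigroup: Q is transient (i.e. there is a strictly positive g ∈ ℓ¹(V,m) ∩ ℓ^∞(V) with ∑_x |u(x)| g(x) m(x) ≤ Q(u)^{1/2} for all u ∈ D(Q)) if and only if ∫₀^∞ (e^{-tL}δ_x)(y) dt < ∞ for all x,y ∈ V. -/

import Mathlib

open scoped ENNReal NNReal BigOperators
open MeasureTheory Filter

/-- A weighted graph `(b,c)` over a vertex set `V`. -/
structure WeightedGraph (V : Type*) where
  b : V → V → ℝ
  c : V → ℝ
  b_nonneg : ∀ x y, 0 ≤ b x y
  b_diag : ∀ x, b x x = 0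
  b_symm : ∀ x y, b x y = b y x
  b_summable : ∀ x, Summable fun y => b x y
  c_nonneg : ∀ x, 0 ≤ c x

/-- Membership in `ℓ²(V,m)`. -/
def MemL2 {V : Type*} (m : V → ℝ) (u : V → ℝ) : Prop :=
  Summable fun x => u x ^ 2 * m x

/-- The inner product of `ℓ²(V,m)`. -/
noncomputable def l2inner {V : Type*} (m : V → ℝ) (u v : V → ℝ) : ℝ :=
  ∑' x, u x * v x * m x

namespace WeightedGraph

variable {V : Type*} (G : WeightedGraph V)

/-- The energy functional `Q̃` with values in `[0,∞]`. -/
noncomputable def energy (u : V → ℝ) : ℝ≥0∞ :=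
  (1 / 2) * ∑' p : V × V, ENNReal.ofReal (G.b p.1 p.2 * (u p.1 - u p.2) ^ 2)
    + ∑' x, ENNReal.ofReal (G.c x * u x ^ 2)

/-- The functions of finite energy (`D̃`). -/
def FiniteEnergy (u : V → ℝ) : Prop := G.energy u < ⊤

/-- The real-valued bilinear energy form (meaningful on functions of finite energy). -/
noncomputable def energyBilin (u v : V → ℝ) : ℝ :=
  (1 / 2) * ∑' p : V × V, G.b p.1 p.2 * (u p.1 - u p.2) * (v p.1 - v p.2)
    + ∑' x, G.c x * u x * v x

/-- The generalized vertex degree. -/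
noncomputable def deg (x : V) : ℝ := (∑' y, G.b x y) + G.c x

/-- The formal Laplacian `L̃` associated with `(b,c)` and the measure `m`. -/
noncomputable def formalL (m : V → ℝ) (u : V → ℝ) (x : V) : ℝ :=
  ((∑' y, G.b x y * (u x - u y)) + G.c x * u x) / m x

/-- Connectedness of the weighted graph: any two vertices are joined by a path of edges. -/
def Connected : Prop :=
  ∀ x y : V, ∃ (n : ℕ) (p : ℕ → V), p 0 = x ∧ p n = y ∧ ∀ i < n, 0 < G.b (p i) (p (i + 1))

/-- The squared distance of the Yamasaki space with base point `o`. -/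
noncomputable def ydistSq (o : V) (u v : V → ℝ) : ℝ :=
  (G.energy (fun x => u x - v x)).toReal + (u o - v o) ^ 2

/-- The domain of the regular Dirichlet form `Q^(D)`: the closure of the finitely
supported functions in `D̃ ∩ ℓ²(V,m)` with respect to the form norm. -/
def regDom (m : V → ℝ) : Set (V → ℝ) :=
  {u | G.FiniteEnergy u ∧ MemL2 m u ∧
    ∃ f : ℕ → V → ℝ, (∀ n, (Function.support (f n)).Finite) ∧
      Filter.Tendsto
        (fun n => (G.energy (fun x => u x - f n x)).toReal + ∑' x, (u x - f n x) ^ 2 * m x)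
        Filter.atTop (nhds 0)}

/-- Transience of a Dirichlet form given by its domain: existence of a strictly positive
reference function `g ∈ ℓ¹(V,m) ∩ ℓ^∞(V)` with `⟨|u|,g⟩ ≤ Q(u)^{1/2}` on the domain. -/
def FormTransient (m : V → ℝ) (dom : Set (V → ℝ)) : Prop :=
  ∃ g : V → ℝ, (∀ x, 0 < g x) ∧ (Summable fun x => g x * m x) ∧ (∃ C, ∀ x, g x ≤ C) ∧
    ∀ u ∈ dom, ∑' x, |u x| * g x * m x ≤ Real.sqrt (G.energyBilin u u)

end WeightedGraph

/-- The data of a Dirichlet form `Q` associated with a weighted graph `(b,c)` on `ℓ²(V,m)`,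
together with its semigroup `T t = e^{-tL}` and resolvent `R α = (L+α)^{-1}`, with the
standard properties: `Q` is a restriction of `Q̃` with `D(Q^(D)) ⊆ D(Q) ⊆ D(Q^(N))`,
the semigroup is symmetric, Markovian, positivity preserving, the resolvent is characterized
by the form, and the resolvent is the Laplace transform of the semigroup. -/
structure FormSetup {V : Type*} (G : WeightedGraph V) (m : V → ℝ) where
  dom : Set (V → ℝ)
  dom_fe : ∀ u ∈ dom, G.FiniteEnergy u
  dom_l2 : ∀ u ∈ dom, MemL2 m u
  reg_sub : G.regDom m ⊆ dom
  T : ℝ → (V → ℝ) → V → ℝ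
  R : ℝ → (V → ℝ) → V → ℝ
  T_linear : ∀ t, IsLinearMap ℝ (T t)
  R_linear : ∀ α, IsLinearMap ℝ (R α)
  T_semigroup : ∀ s t : ℝ, 0 < s → 0 < t → ∀ f, T (s + t) f = T s (T t f)
  T_l2 : ∀ t : ℝ, 0 < t → ∀ f, MemL2 m f → MemL2 m (T t f)
  T_symm : ∀ t : ℝ, 0 < t → ∀ f g, MemL2 m f → MemL2 m g →
    l2inner m (T t f) g = l2inner m f (T t g)
  T_contraction : ∀ t : ℝ, 0 < t → ∀ f, MemL2 m f →
    ∑' x, T t f x ^ 2 * m x ≤ ∑' x, f x ^ 2 * m x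
  T_pos : ∀ t : ℝ, 0 < t → ∀ f, (∀ x, 0 ≤ f x) → ∀ x, 0 ≤ T t f x
  T_markov : ∀ t : ℝ, 0 < t → ∀ f, (∀ x, 0 ≤ f x ∧ f x ≤ 1) →
    ∀ x, 0 ≤ T t f x ∧ T t f x ≤ 1
  T_cont : ∀ f, MemL2 m f → ∀ x, ContinuousOn (fun t => T t f x) (Set.Ioi (0 : ℝ))
  R_mem : ∀ α : ℝ, 0 < α → ∀ f, MemL2 m f → R α f ∈ dom
  R_pos : ∀ α : ℝ, 0 < α → ∀ f, (∀ x, 0 ≤ f x) → ∀ x, 0 ≤ R α f x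
  R_char : ∀ α : ℝ, 0 < α → ∀ f, MemL2 m f → ∀ v ∈ dom,
    G.energyBilin (R α f) v + α * l2inner m (R α f) v = l2inner m f v
  R_laplace : ∀ α : ℝ, 0 < α → ∀ f, MemL2 m f → (∀ x, 0 ≤ f x) → ∀ y,
    ENNReal.ofReal (R α f y) =
      ∫⁻ t in Set.Ioi (0 : ℝ), ENNReal.ofReal (Real.exp (-α * t) * T t f y)

namespace FormSetup

variable {V : Type*} {G : WeightedGraph V} {m : V → ℝ}

open scoped Classical in
/-- The Green function `G(x,y) = ∫₀^∞ (e^{-tL} δ_x)(y) dt`, with values in `[0,∞]`. -/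
noncomputable def green (S : FormSetup G m) (x y : V) : ℝ≥0∞ :=
  ∫⁻ t in Set.Ioi (0 : ℝ), ENNReal.ofReal (S.T t (fun z => if z = x then 1 else 0) y)

/-- The extended Dirichlet space `D(Q)_e`: functions which are pointwise limits of
`Q`-Cauchy sequences from `D(Q)`. -/
def extDom (S : FormSetup G m) : Set (V → ℝ) :=
  {u | ∃ f : ℕ → V → ℝ, (∀ n, f n ∈ S.dom) ∧
    (∀ ε > (0 : ℝ), ∃ N, ∀ p ≥ N, ∀ q ≥ N,
      G.energyBilin (fun x => f p x - f q x) (fun x => f p x - f q x) < ε) ∧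
    ∀ x, Filter.Tendsto (fun n => f n x) Filter.atTop (nhds (u x))}

/-- Stochastic completeness: the resolvent `(L+1)^{-1}`, extended to `ℓ^∞(V)` by monotone
limits, maps the constant function `1` to `1`. -/
def StochComplete (S : FormSetup G m) : Prop :=
  ∀ f : ℕ → V → ℝ, (∀ n, MemL2 m (f n)) →
    (∀ n x, 0 ≤ f n x ∧ f n x ≤ f (n + 1) x ∧ f n x ≤ 1) →
    (∀ x, Filter.Tendsto (fun n => f n x) Filter.atTop (nhds 1)) →
    ∀ x, Filter.Tendsto (fun n => S.R 1 (f n) x) Filter.atTop (nhds 1)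

end FormSetup

/-! ### Auxiliary lemmas -/

section Aux

lemma my_sqrt_add_sqrt_le {p q r s : ℝ} (hp : 0 ≤ p) (hq : 0 ≤ q) (hr : 0 ≤ r) (hs : 0 ≤ s) :
    Real.sqrt p * Real.sqrt q + Real.sqrt r * Real.sqrt s ≤
      Real.sqrt (p + r) * Real.sqrt (q + s) := by
  have e1 := Real.sq_sqrt hp
  have e2 := Real.sq_sqrt hq
  have e3 := Real.sq_sqrt hr
  have e4 := Real.sq_sqrt hs
  have h1 : (Real.sqrt p * Real.sqrt q + Real.sqrt r * Real.sqrt s) ^ 2 ≤ (p + r) * (q + s) := by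
    nlinarith [sq_nonneg (Real.sqrt p * Real.sqrt s - Real.sqrt r * Real.sqrt q),
      Real.sqrt_nonneg p, Real.sqrt_nonneg q, Real.sqrt_nonneg r, Real.sqrt_nonneg s]
  have h0 : 0 ≤ Real.sqrt p * Real.sqrt q + Real.sqrt r * Real.sqrt s := by positivity
  calc Real.sqrt p * Real.sqrt q + Real.sqrt r * Real.sqrt s
      = Real.sqrt ((Real.sqrt p * Real.sqrt q + Real.sqrt r * Real.sqrt s) ^ 2) :=
        (Real.sqrt_sq h0).symm
    _ ≤ Real.sqrt ((p + r) * (q + s)) := Real.sqrt_le_sqrt h1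
    _ = Real.sqrt (p + r) * Real.sqrt (q + s) := Real.sqrt_mul (by linarith) _

lemma my_tsum_cs {ι : Type*} {a b w : ι → ℝ} (hw : ∀ i, 0 ≤ w i)
    (ha : Summable fun i => a i ^ 2 * w i) (hb : Summable fun i => b i ^ 2 * w i) :
    Summable (fun i => a i * b i * w i) ∧
      |∑' i, a i * b i * w i| ≤
        Real.sqrt (∑' i, a i ^ 2 * w i) * Real.sqrt (∑' i, b i ^ 2 * w i) := by
  have habs : ∀ i, |a i * b i * w i| ≤ (a i ^ 2 * w i + b i ^ 2 * w i) / 2 := by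
    intro i
    rw [abs_mul, abs_of_nonneg (hw i), abs_mul]
    have h1 : |a i| * |b i| ≤ (a i ^ 2 + b i ^ 2) / 2 := by
      nlinarith [sq_nonneg (|a i| - |b i|), sq_abs (a i), sq_abs (b i)]
    nlinarith [hw i, sq_nonneg (a i), sq_nonneg (b i), abs_nonneg (a i), abs_nonneg (b i)]
  have hab : Summable (fun i => a i * b i * w i) :=
    Summable.of_abs
      (Summable.of_nonneg_of_le (fun i => abs_nonneg _) habs ((ha.add hb).div_const 2))
  refine ⟨hab, ?_⟩
  set Sa := ∑' i, a i ^ 2 * w i with hSa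
  set Sb := ∑' i, b i ^ 2 * w i with hSb
  set Sab := ∑' i, a i * b i * w i with hSab
  have hSa0 : 0 ≤ Sa := tsum_nonneg fun i => mul_nonneg (sq_nonneg _) (hw i)
  have hquad : ∀ t : ℝ, 0 ≤ Sb * (t * t) + (2 * Sab) * t + Sa := by
    intro t
    have hexp : (fun i => b i ^ 2 * w i * (t * t) + (a i * b i * w i) * (2 * t) + a i ^ 2 * w i)
        = fun i => (a i + t * b i) ^ 2 * w i := by funext i; ring
    have hnn : (0:ℝ) ≤ ∑' i, (a i + t * b i) ^ 2 * w i :=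
      tsum_nonneg fun i => mul_nonneg (sq_nonneg _) (hw i)
    calc (0:ℝ) ≤ ∑' i, (a i + t * b i) ^ 2 * w i := hnn
      _ = ∑' i, (b i ^ 2 * w i * (t * t) + (a i * b i * w i) * (2 * t) + a i ^ 2 * w i) := by
          rw [hexp]
      _ = Sb * (t * t) + (2 * Sab) * t + Sa := by
          rw [Summable.tsum_add ((hb.mul_right _).add (hab.mul_right _)) ha,
            Summable.tsum_add (hb.mul_right _) (hab.mul_right _), tsum_mul_right, tsum_mul_right]
          ring
  have hd := discrim_le_zero hquad
  rw [discrim] at hd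
  have hsq : Sab ^ 2 ≤ Sa * Sb := by nlinarith
  calc |Sab| = Real.sqrt (Sab ^ 2) := (Real.sqrt_sq_eq_abs _).symm
    _ ≤ Real.sqrt (Sa * Sb) := Real.sqrt_le_sqrt hsq
    _ = Real.sqrt Sa * Real.sqrt Sb := Real.sqrt_mul hSa0 _

open scoped Classical in
/-- Dirac delta at `x`. -/
noncomputable def dlt {V : Type*} (x : V) : V → ℝ := fun z => if z = x then 1 else 0

lemma dlt_nonneg {V : Type*} (x : V) : ∀ z, 0 ≤ dlt x z := by
  intro z; unfold dlt; split <;> norm_num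

lemma dlt_memL2 {V : Type*} {m : V → ℝ} (x : V) : MemL2 m (dlt x) := by
  refine summable_of_ne_finset_zero (s := {x}) fun z hz => ?_
  have hzx : z ≠ x := by simpa using hz
  simp [dlt, hzx]

lemma l2inner_dlt {V : Type*} (m : V → ℝ) (y : V) (u : V → ℝ) :
    l2inner m (dlt y) u = u y * m y := by
  unfold l2inner
  rw [tsum_eq_single y (fun z hz => by simp [dlt, hz])]
  simp [dlt]

namespace WeightedGraph

variable {V : Type*}

lemma energyBilin_self_nonneg (G : WeightedGraph V) (u : V → ℝ) : 0 ≤ G.energyBilin u u := by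
  unfold energyBilin
  have h1 : 0 ≤ ∑' p : V × V, G.b p.1 p.2 * (u p.1 - u p.2) * (u p.1 - u p.2) :=
    tsum_nonneg fun p => by
      rw [mul_assoc]; exact mul_nonneg (G.b_nonneg _ _) (mul_self_nonneg _)
  have h2 : 0 ≤ ∑' x, G.c x * u x * u x :=
    tsum_nonneg fun x => by rw [mul_assoc]; exact mul_nonneg (G.c_nonneg _) (mul_self_nonneg _)
  have h3 := mul_nonneg (by norm_num : (0:ℝ) ≤ 1 / 2) h1
  linarith

lemma fe_summable (G : WeightedGraph V) {u : V → ℝ} (h : G.FiniteEnergy u) :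
    Summable (fun p : V × V => (u p.1 - u p.2) ^ 2 * G.b p.1 p.2) ∧
      Summable (fun x => u x ^ 2 * G.c x) := by
  unfold FiniteEnergy energy at h
  have h1 : (∑' p : V × V, ENNReal.ofReal (G.b p.1 p.2 * (u p.1 - u p.2) ^ 2)) ≠ ⊤ := by
    intro htop
    rw [htop, ENNReal.mul_top (by norm_num)] at h
    simp at h
  have h2 : (∑' x, ENNReal.ofReal (G.c x * u x ^ 2)) ≠ ⊤ := by
    intro htop
    rw [htop] at h
    simp at h
  constructor
  · refine (ENNReal.summable_toReal h1).congr fun p => ?_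
    rw [ENNReal.toReal_ofReal (mul_nonneg (G.b_nonneg _ _) (sq_nonneg _))]; ring
  · refine (ENNReal.summable_toReal h2).congr fun x => ?_
    rw [ENNReal.toReal_ofReal (mul_nonneg (G.c_nonneg _) (sq_nonneg _))]; ring

lemma energyBilin_self_eq (G : WeightedGraph V) (u : V → ℝ) :
    G.energyBilin u u =
      (1 / 2) * (∑' p : V × V, (u p.1 - u p.2) ^ 2 * G.b p.1 p.2) + ∑' x, u x ^ 2 * G.c x := by
  unfold energyBilin
  congr 1
  · congr 1; exact tsum_congr fun p => by ring
  · exact tsum_congr fun x => by ring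

lemma energyBilin_cs (G : WeightedGraph V) {u v : V → ℝ}
    (hu : G.FiniteEnergy u) (hv : G.FiniteEnergy v) :
    |G.energyBilin u v| ≤ Real.sqrt (G.energyBilin u u) * Real.sqrt (G.energyBilin v v) := by
  obtain ⟨hub, huc⟩ := G.fe_summable hu
  obtain ⟨hvb, hvc⟩ := G.fe_summable hv
  have hwb : ∀ p : V × V, 0 ≤ G.b p.1 p.2 := fun p => G.b_nonneg _ _
  have hcs1 := my_tsum_cs (a := fun p : V × V => u p.1 - u p.2)
    (b := fun p : V × V => v p.1 - v p.2) (w := fun p : V × V => G.b p.1 p.2) hwb hub hvb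
  have hcs2 := my_tsum_cs (a := u) (b := v) (w := G.c) G.c_nonneg huc hvc
  have e1 : G.energyBilin u v =
      (1 / 2) * (∑' p : V × V, (u p.1 - u p.2) * (v p.1 - v p.2) * G.b p.1 p.2)
        + ∑' x, u x * v x * G.c x := by
    unfold energyBilin
    congr 1
    · congr 1; exact tsum_congr fun p => by ring
    · exact tsum_congr fun x => by ring
  set A1 := ∑' p : V × V, (u p.1 - u p.2) ^ 2 * G.b p.1 p.2 with hA1d
  set A2 := ∑' p : V × V, (v p.1 - v p.2) ^ 2 * G.b p.1 p.2 with hA2d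
  set C1 := ∑' x, u x ^ 2 * G.c x with hC1d
  set C2 := ∑' x, v x ^ 2 * G.c x with hC2d
  have hA1 : 0 ≤ A1 := tsum_nonneg fun p => mul_nonneg (sq_nonneg _) (hwb p)
  have hA2 : 0 ≤ A2 := tsum_nonneg fun p => mul_nonneg (sq_nonneg _) (hwb p)
  have hC1 : 0 ≤ C1 := tsum_nonneg fun x => mul_nonneg (sq_nonneg _) (G.c_nonneg x)
  have hC2 : 0 ≤ C2 := tsum_nonneg fun x => mul_nonneg (sq_nonneg _) (G.c_nonneg x)
  have step1 : |G.energyBilin u v| ≤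
      (1 / 2) * (Real.sqrt A1 * Real.sqrt A2) + Real.sqrt C1 * Real.sqrt C2 := by
    rw [e1]
    refine (abs_add_le _ _).trans ?_
    have hh : |(1:ℝ) / 2 * ∑' p : V × V, (u p.1 - u p.2) * (v p.1 - v p.2) * G.b p.1 p.2|
        = (1 / 2) * |∑' p : V × V, (u p.1 - u p.2) * (v p.1 - v p.2) * G.b p.1 p.2| := by
      rw [abs_mul, abs_of_nonneg (by norm_num : (0:ℝ) ≤ 1 / 2)]
    rw [hh]
    have h1 := hcs1.2
    have h2 := hcs2.2
    nlinarith [h1, h2, abs_nonneg (∑' x, u x * v x * G.c x)]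
  have half : Real.sqrt ((1 / 2) * A1) * Real.sqrt ((1 / 2) * A2)
      = (1 / 2) * (Real.sqrt A1 * Real.sqrt A2) := by
    rw [Real.sqrt_mul (by norm_num : (0:ℝ) ≤ 1 / 2) A1,
      Real.sqrt_mul (by norm_num : (0:ℝ) ≤ 1 / 2) A2]
    have h := Real.mul_self_sqrt (by norm_num : (0:ℝ) ≤ 1 / 2)
    linear_combination Real.sqrt A1 * Real.sqrt A2 * h
  have final : (1 / 2) * (Real.sqrt A1 * Real.sqrt A2) + Real.sqrt C1 * Real.sqrt C2
      ≤ Real.sqrt ((1 / 2) * A1 + C1) * Real.sqrt ((1 / 2) * A2 + C2) := by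
    rw [← half]
    exact my_sqrt_add_sqrt_le (by positivity) (by positivity) hC1 hC2
  rw [G.energyBilin_self_eq u, G.energyBilin_self_eq v]
  exact step1.trans final

end WeightedGraph

lemma l2_cs {V : Type*} {m u v : V → ℝ} (hm : ∀ x, 0 ≤ m x) (hu : MemL2 m u) (hv : MemL2 m v) :
    Summable (fun x => u x * v x * m x) ∧
      |l2inner m u v| ≤ Real.sqrt (l2inner m u u) * Real.sqrt (l2inner m v v) := by
  have h := my_tsum_cs (a := u) (b := v) (w := m) hm hu hv
  have e : ∀ w : V → ℝ, l2inner m w w = ∑' x, w x ^ 2 * m x := fun w =>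
    tsum_congr fun x => by ring
  exact ⟨h.1, by rw [e u, e v]; exact h.2⟩

lemma l2inner_self_nonneg {V : Type*} (m : V → ℝ) (hm : ∀ x, 0 ≤ m x) (v : V → ℝ) :
    0 ≤ l2inner m v v :=
  tsum_nonneg fun z => mul_nonneg (mul_self_nonneg _) (hm z)

end Aux

section Green

variable {V : Type*} {G : WeightedGraph V} {m : V → ℝ}

lemma green_eq (S : FormSetup G m) (x y : V) :
    S.green x y = ∫⁻ t in Set.Ioi (0 : ℝ), ENNReal.ofReal (S.T t (dlt x) y) := rfl

lemma ofReal_R_dlt_le_green (S : FormSetup G m) {α : ℝ} (hα : 0 < α) (x y : V) :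
    ENNReal.ofReal (S.R α (dlt x) y) ≤ S.green x y := by
  rw [S.R_laplace α hα (dlt x) (dlt_memL2 x) (dlt_nonneg x) y, green_eq]
  refine lintegral_mono_ae ((ae_restrict_iff' measurableSet_Ioi).2 (ae_of_all _ fun t ht => ?_))
  have ht' : (0:ℝ) < t := ht
  have hT : 0 ≤ S.T t (dlt x) y := S.T_pos t ht' (dlt x) (dlt_nonneg x) y
  have he : Real.exp (-α * t) ≤ 1 := Real.exp_le_one_iff.2 (by nlinarith)
  exact ENNReal.ofReal_le_ofReal (mul_le_of_le_one_left hT he)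

lemma green_le_of_forall (S : FormSetup G m) (x y : V) {C : ℝ}
    (h : ∀ α : ℝ, 0 < α → S.R α (dlt x) y ≤ C) : S.green x y ≤ ENNReal.ofReal C := by
  have hmeas : AEMeasurable (fun t => S.T t (dlt x) y)
      (MeasureTheory.volume.restrict (Set.Ioi (0:ℝ))) :=
    (S.T_cont (dlt x) (dlt_memL2 x) y).aemeasurable measurableSet_Ioi
  set F : ℕ → ℝ → ℝ≥0∞ :=
    fun n t => ENNReal.ofReal (Real.exp (-(1 / ((n:ℝ) + 1)) * t) * S.T t (dlt x) y) with hF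
  have hFmeas : ∀ n, AEMeasurable (F n) (MeasureTheory.volume.restrict (Set.Ioi (0:ℝ))) := by
    intro n
    exact ENNReal.measurable_ofReal.comp_aemeasurable
      (((Real.continuous_exp.comp (continuous_const.mul continuous_id)).aemeasurable).mul hmeas)
  have hkeymono : ∀ t : ℝ, 0 < t → Monotone fun n => F n t := by
    intro t ht
    intro n k hnk
    have hT : 0 ≤ S.T t (dlt x) y := S.T_pos t ht _ (dlt_nonneg x) y
    apply ENNReal.ofReal_le_ofReal
    refine mul_le_mul_of_nonneg_right ?_ hT
    apply Real.exp_le_exp.2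
    have h1 : (1:ℝ) / ((k:ℝ) + 1) ≤ 1 / ((n:ℝ) + 1) := by
      apply one_div_le_one_div_of_le (by positivity)
      have : (n:ℝ) ≤ (k:ℝ) := by exact_mod_cast hnk
      linarith
    nlinarith
  have hmono : ∀ᵐ t ∂(MeasureTheory.volume.restrict (Set.Ioi (0:ℝ))), Monotone fun n => F n t :=
    (ae_restrict_iff' measurableSet_Ioi).2 (ae_of_all _ fun t ht => hkeymono t ht)
  have hsup : ∀ᵐ t ∂(MeasureTheory.volume.restrict (Set.Ioi (0:ℝ))),
      ENNReal.ofReal (S.T t (dlt x) y) = ⨆ n, F n t := by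
    refine (ae_restrict_iff' measurableSet_Ioi).2 (ae_of_all _ fun t ht => ?_)
    have ht' : (0:ℝ) < t := ht
    have hlim : Filter.Tendsto (fun n => F n t) Filter.atTop
        (nhds (ENNReal.ofReal (S.T t (dlt x) y))) := by
      have h1 : Filter.Tendsto (fun n : ℕ => -(1 / ((n:ℝ) + 1)) * t) Filter.atTop (nhds 0) := by
        have h0 : Filter.Tendsto (fun n : ℕ => 1 / ((n:ℝ) + 1)) Filter.atTop (nhds 0) :=
          tendsto_one_div_add_atTop_nhds_zero_nat
        have := (h0.neg).mul_const t
        simpa using this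
      have h2 : Filter.Tendsto (fun n : ℕ => Real.exp (-(1 / ((n:ℝ) + 1)) * t))
          Filter.atTop (nhds 1) := by
        have := (Real.continuous_exp.tendsto 0).comp h1
        simpa [Function.comp_def] using this
      have h3 : Filter.Tendsto
          (fun n : ℕ => Real.exp (-(1 / ((n:ℝ) + 1)) * t) * S.T t (dlt x) y)
          Filter.atTop (nhds (S.T t (dlt x) y)) := by
        have := h2.mul_const (S.T t (dlt x) y)
        simpa using this
      exact (ENNReal.continuous_ofReal.tendsto _).comp h3
    exact (tendsto_nhds_unique (tendsto_atTop_iSup (hkeymono t ht')) hlim).symm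
  calc S.green x y = ∫⁻ t in Set.Ioi (0:ℝ), ENNReal.ofReal (S.T t (dlt x) y) := rfl
    _ = ∫⁻ t in Set.Ioi (0:ℝ), ⨆ n, F n t := lintegral_congr_ae hsup
    _ = ⨆ n, ∫⁻ t in Set.Ioi (0:ℝ), F n t := lintegral_iSup' hFmeas hmono
    _ ≤ ENNReal.ofReal C := by
        refine iSup_le fun n => ?_
        have hα : (0:ℝ) < 1 / ((n:ℝ) + 1) := by positivity
        have hl := S.R_laplace _ hα (dlt x) (dlt_memL2 x) (dlt_nonneg x) y
        simp only [hF]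
        rw [← hl]
        exact ENNReal.ofReal_le_ofReal (h _ hα)

end Green

/-- the Dirichlet form `Q` is transient (existence of a strictly positive
reference function `g ∈ ℓ¹(V,m) ∩ ℓ^∞(V)` with `⟨|u|,g⟩ ≤ Q(u)^{1/2}` on `D(Q)`) if and
only if its semigroup is transient (the Green function is finite everywhere). -/
theorem form_transient_iff_semigroup_transient {V : Type*} [Countable V]
    (G : WeightedGraph V) (m : V → ℝ) (hm : ∀ x, 0 < m x) (S : FormSetup G m) :
    G.FormTransient m S.dom ↔ ∀ x y, S.green x y < ⊤ := by
  constructor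
  · -- transience of the form implies finiteness of the Green function
    rintro ⟨g, hgpos, hgsum, ⟨Cg, hCg⟩, hineq⟩ x y
    -- uniform bound on the resolvent
    have hb : ∀ α : ℝ, 0 < α →
        S.R α (dlt x) y ≤ Real.sqrt ((m x / (g x * m x) ^ 2) * m x) / (g y * m y) := by
      intro α hα
      set v := S.R α (dlt x) with hv
      have hvdom := S.R_mem α hα _ (dlt_memL2 x)
      have hvpos : ∀ z, 0 ≤ v z := fun z => S.R_pos α hα _ (dlt_nonneg x) z
      have hvl2 : MemL2 m v := S.dom_l2 _ hvdom
      have hid : G.energyBilin v v + α * l2inner m v v = v x * m x := by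
        have h := S.R_char α hα (dlt x) (dlt_memL2 x) v hvdom
        rwa [l2inner_dlt] at h
      have hl2vv := l2inner_self_nonneg m (fun z => (hm z).le) v
      have hQle : G.energyBilin v v ≤ v x * m x := by
        nlinarith [mul_nonneg hα.le hl2vv]
      have htr := hineq v hvdom
      have hsqrt : Real.sqrt (G.energyBilin v v) ≤ Real.sqrt (v x * m x) :=
        Real.sqrt_le_sqrt hQle
      -- summability of the weighted series
      have hg2 : Summable (fun z => g z ^ 2 * m z) := by
        refine Summable.of_nonneg_of_le
          (fun z => mul_nonneg (sq_nonneg _) (hm z).le) (fun z => ?_) (hgsum.mul_left Cg)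
        nlinarith [hCg z, hgpos z, hm z,
          mul_nonneg (sub_nonneg.2 (hCg z)) (mul_pos (hgpos z) (hm z)).le]
      have hSvg := (my_tsum_cs (a := v) (b := g) (w := m) (fun z => (hm z).le) hvl2 hg2).1
      have habs : Summable (fun z => |v z| * g z * m z) := by
        refine hSvg.abs.congr fun z => ?_
        rw [abs_mul, abs_mul, abs_of_nonneg (hgpos z).le, abs_of_nonneg (hm z).le]
      have hsingle : ∀ z, v z * (g z * m z) ≤ Real.sqrt (v x * m x) := by
        intro z
        have h1 : v z * (g z * m z) = |v z| * g z * m z := by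
          rw [abs_of_nonneg (hvpos z)]; ring
        rw [h1]
        refine (Summable.le_tsum habs z fun j _ => ?_).trans (htr.trans hsqrt)
        exact mul_nonneg (mul_nonneg (abs_nonneg _) (hgpos j).le) (hm j).le
      have hvx : v x ≤ m x / (g x * m x) ^ 2 := by
        have hc : 0 < g x * m x := mul_pos (hgpos x) (hm x)
        rcases eq_or_lt_of_le (hvpos x) with h0 | hpos
        · rw [← h0]; exact div_nonneg (hm x).le (sq_nonneg _)
        · rw [le_div_iff₀ (by positivity)]
          have h := hsingle x
          have hs := Real.sq_sqrt (mul_nonneg (hvpos x) (hm x).le)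
          have hsq2 : (v x * (g x * m x)) ^ 2 ≤ Real.sqrt (v x * m x) ^ 2 :=
            pow_le_pow_left₀ (mul_nonneg (hvpos x) hc.le) h 2
          nlinarith [hsq2, hs, hpos, hc]
      rw [le_div_iff₀ (mul_pos (hgpos y) (hm y))]
      refine (hsingle y).trans (Real.sqrt_le_sqrt ?_)
      exact mul_le_mul_of_nonneg_right hvx (hm x).le
    exact lt_of_le_of_lt (green_le_of_forall S x y hb) ENNReal.ofReal_lt_top
  · -- finiteness of the Green function implies transience of the form
    intro hgreen
    obtain ⟨ι, hι⟩ := exists_injective_nat V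
    -- the key pointwise bound coming from finiteness of the Green function
    have hkey : ∀ u ∈ S.dom, ∀ y : V, |u y| * m y ≤
        Real.sqrt ((S.green y y).toReal * m y) * Real.sqrt (G.energyBilin u u) := by
      intro u hu y
      have hfe_u := S.dom_fe u hu
      have hl2u := S.dom_l2 u hu
      have hB0 := G.energyBilin_self_nonneg u
      set N := Real.sqrt (l2inner m u u) with hN
      have hN0 : 0 ≤ N := Real.sqrt_nonneg _
      set s := Real.sqrt ((S.green y y).toReal * m y) with hs
      have hs0 : 0 ≤ s := Real.sqrt_nonneg _
      refine le_of_forall_pos_le_add fun ε hε => ?_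
      set M := (N + 1) * (s + 1) with hM
      have hM0 : 0 < M := by positivity
      set α := (ε / M) ^ 2 with hαdef
      have hα : 0 < α := by positivity
      set v := S.R α (dlt y) with hv
      have hvdom := S.R_mem α hα _ (dlt_memL2 y)
      have hfe_v := S.dom_fe _ hvdom
      have hl2v : MemL2 m v := S.dom_l2 _ hvdom
      have hvpos : ∀ z, 0 ≤ v z := fun z => S.R_pos α hα _ (dlt_nonneg y) z
      have hidu : G.energyBilin v u + α * l2inner m v u = u y * m y := by
        have h := S.R_char α hα (dlt y) (dlt_memL2 y) u hu
        rwa [l2inner_dlt] at h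
      have hidv : G.energyBilin v v + α * l2inner m v v = v y * m y := by
        have h := S.R_char α hα (dlt y) (dlt_memL2 y) v hvdom
        rwa [l2inner_dlt] at h
      have hl2vv0 := l2inner_self_nonneg m (fun z => (hm z).le) v
      have hBvv0 := G.energyBilin_self_nonneg v
      have hvy_le : v y ≤ (S.green y y).toReal :=
        (ENNReal.ofReal_le_iff_le_toReal (hgreen y y).ne).1 (ofReal_R_dlt_le_green S hα y y)
      have hvym : v y * m y ≤ (S.green y y).toReal * m y :=
        mul_le_mul_of_nonneg_right hvy_le (hm y).le
      have hBvv_le : G.energyBilin v v ≤ (S.green y y).toReal * m y := by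
        nlinarith [mul_nonneg hα.le hl2vv0]
      have hαl2 : α * l2inner m v v ≤ (S.green y y).toReal * m y := by nlinarith
      have hcs1 := G.energyBilin_cs hfe_v hfe_u
      have hcs2 := (l2_cs (fun z => (hm z).le) hl2v hl2u).2
      have h5 : |G.energyBilin v u| ≤ s * Real.sqrt (G.energyBilin u u) := by
        refine hcs1.trans ?_
        have h51 : Real.sqrt (G.energyBilin v v) ≤ s := by
          rw [hs]; exact Real.sqrt_le_sqrt hBvv_le
        exact mul_le_mul_of_nonneg_right h51 (Real.sqrt_nonneg _)
      have h6 : α * |l2inner m v u| ≤ Real.sqrt α * (s * N) := by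
        have hl2vv_le : l2inner m v v ≤ (S.green y y).toReal * m y / α := by
          rw [le_div_iff₀ hα]; nlinarith
        have h8 : Real.sqrt (l2inner m v v) ≤ Real.sqrt ((S.green y y).toReal * m y / α) :=
          Real.sqrt_le_sqrt hl2vv_le
        have h9 : Real.sqrt ((S.green y y).toReal * m y / α) = s / Real.sqrt α := by
          rw [hs]
          exact Real.sqrt_div (mul_nonneg ENNReal.toReal_nonneg (hm y).le) α
        have hsα : (0:ℝ) < Real.sqrt α := Real.sqrt_pos.2 hα
        have h10 : α * (s / Real.sqrt α) = Real.sqrt α * s := by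
          have hself := Real.mul_self_sqrt hα.le
          calc α * (s / Real.sqrt α)
              = (Real.sqrt α * Real.sqrt α) * (s / Real.sqrt α) := by rw [hself]
            _ = Real.sqrt α * (Real.sqrt α * (s / Real.sqrt α)) := by ring
            _ = Real.sqrt α * s := by
                rw [← mul_div_assoc, mul_div_cancel_left₀ s hsα.ne']
        calc α * |l2inner m v u|
            ≤ α * (Real.sqrt (l2inner m v v) * N) :=
              mul_le_mul_of_nonneg_left (by rw [hN]; exact hcs2) hα.le
          _ ≤ α * ((s / Real.sqrt α) * N) := by
              refine mul_le_mul_of_nonneg_left ?_ hα.le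
              exact mul_le_mul_of_nonneg_right (h8.trans h9.le) hN0
          _ = (α * (s / Real.sqrt α)) * N := by ring
          _ = (Real.sqrt α * s) * N := by rw [h10]
          _ = Real.sqrt α * (s * N) := by ring
      have habs : |u y * m y| ≤ |G.energyBilin v u| + α * |l2inner m v u| := by
        rw [← hidu]
        refine (abs_add_le _ _).trans ?_
        rw [abs_mul, abs_of_pos hα]
      have hsqα : Real.sqrt α = ε / M := Real.sqrt_sq (by positivity)
      have hlast : Real.sqrt α * (s * N) ≤ ε := by
        rw [hsqα]
        have hsN : s * N ≤ M := by rw [hM]; nlinarith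
        calc ε / M * (s * N) ≤ ε / M * M := by
              refine mul_le_mul_of_nonneg_left hsN (by positivity)
          _ = ε := div_mul_cancel₀ ε hM0.ne'
      have huy : |u y| * m y = |u y * m y| := by
        rw [abs_mul, abs_of_pos (hm y)]
      rw [huy]
      calc |u y * m y| ≤ |G.energyBilin v u| + α * |l2inner m v u| := habs
        _ ≤ s * Real.sqrt (G.energyBilin u u) + Real.sqrt α * (s * N) := by
            linarith [h5, h6]
        _ ≤ s * Real.sqrt (G.energyBilin u u) + ε := by linarith [hlast]
    -- construction of the reference function g
    set D : V → ℝ := fun y => Real.sqrt ((S.green y y).toReal * m y) / m y with hD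
    have hD0 : ∀ y, 0 ≤ D y := fun y => div_nonneg (Real.sqrt_nonneg _) (hm y).le
    have hden : ∀ y, (0:ℝ) < 2 * (1 + D y) * (1 + m y) := by
      intro y
      have h1 : (0:ℝ) < 1 + D y := by linarith [hD0 y]
      have h2 : (0:ℝ) < 1 + m y := by linarith [hm y]
      have := mul_pos (mul_pos (by norm_num : (0:ℝ) < 2) h1) h2
      linarith
    set g : V → ℝ := fun y => (1 / 2 : ℝ) ^ (ι y) / (2 * (1 + D y) * (1 + m y)) with hg
    have hgpos : ∀ y, 0 < g y := fun y =>
      div_pos (pow_pos (by norm_num) _) (hden y)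
    have hgeo : Summable (fun y => ((1 / 2 : ℝ)) ^ (ι y)) :=
      (summable_geometric_of_lt_one (by norm_num) (by norm_num)).comp_injective hι
    have hgm_le : ∀ y, g y * m y ≤ (1 / 2 : ℝ) ^ (ι y) := by
      intro y
      have hfrac : m y / (2 * (1 + D y) * (1 + m y)) ≤ 1 := by
        rw [div_le_one (hden y)]
        nlinarith [hD0 y, hm y]
      calc g y * m y = (1 / 2 : ℝ) ^ (ι y) * (m y / (2 * (1 + D y) * (1 + m y))) := by
            rw [hg]; ring
        _ ≤ (1 / 2 : ℝ) ^ (ι y) * 1 := mul_le_mul_of_nonneg_left hfrac (by positivity)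
        _ = (1 / 2 : ℝ) ^ (ι y) := mul_one _
    have hgsum : Summable (fun y => g y * m y) :=
      Summable.of_nonneg_of_le (fun y => mul_nonneg (hgpos y).le (hm y).le) hgm_le hgeo
    have hDgm_le : ∀ y, D y * (g y * m y) ≤ (1 / 2 : ℝ) ^ (ι y) * (1 / 2) := by
      intro y
      have hfrac : D y * m y / (2 * (1 + D y) * (1 + m y)) ≤ 1 / 2 := by
        rw [div_le_iff₀ (hden y)]
        nlinarith [hD0 y, hm y, mul_nonneg (hD0 y) (hm y).le]
      calc D y * (g y * m y)
          = (1 / 2 : ℝ) ^ (ι y) * (D y * m y / (2 * (1 + D y) * (1 + m y))) := by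
            rw [hg]; ring
        _ ≤ (1 / 2 : ℝ) ^ (ι y) * (1 / 2) := mul_le_mul_of_nonneg_left hfrac (by positivity)
    have hDg_sum : Summable (fun y => D y * (g y * m y)) :=
      Summable.of_nonneg_of_le
        (fun y => mul_nonneg (hD0 y) (mul_nonneg (hgpos y).le (hm y).le)) hDgm_le
        (hgeo.mul_right _)
    have htsumD : ∑' y, D y * (g y * m y) ≤ 1 := by
      calc ∑' y, D y * (g y * m y) ≤ ∑' n : ℕ, (1 / 2 : ℝ) ^ n * (1 / 2) :=
            Summable.tsum_le_tsum_of_inj ι hι (fun n _ => by positivity) hDgm_le hDg_sum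
              ((summable_geometric_of_lt_one (by norm_num) (by norm_num)).mul_right _)
        _ = (1 - 1 / 2)⁻¹ * (1 / 2) := by
            rw [tsum_mul_right, tsum_geometric_of_lt_one (by norm_num) (by norm_num)]
        _ = 1 := by norm_num
    refine ⟨g, hgpos, hgsum, ⟨1, fun y => ?_⟩, fun u hu => ?_⟩
    · -- boundedness of g
      rw [hg]
      have h1 : ((1 / 2 : ℝ)) ^ (ι y) ≤ 1 := pow_le_one₀ (by norm_num) (by norm_num)
      have h2 : (1:ℝ) ≤ 2 * (1 + D y) * (1 + m y) := by nlinarith [hD0 y, hm y]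
      rw [div_le_one (hden y)]
      linarith
    · -- the transience inequality
      have hB0 := G.energyBilin_self_nonneg u
      set sqB := Real.sqrt (G.energyBilin u u) with hsqB
      have hsqB0 : 0 ≤ sqB := Real.sqrt_nonneg _
      have hkey' : ∀ y, |u y| ≤ D y * sqB := by
        intro y
        have h := hkey u hu y
        rw [hD]
        rw [div_mul_eq_mul_div, le_div_iff₀ (hm y)]
        exact h
      have hptw : ∀ y, |u y| * g y * m y ≤ sqB * (D y * (g y * m y)) := by
        intro y
        have h := mul_le_mul_of_nonneg_right (hkey' y)
          (mul_nonneg (hgpos y).le (hm y).le)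
        calc |u y| * g y * m y = |u y| * (g y * m y) := by ring
          _ ≤ D y * sqB * (g y * m y) := h
          _ = sqB * (D y * (g y * m y)) := by ring
      have hsumL : Summable (fun y => |u y| * g y * m y) :=
        Summable.of_nonneg_of_le
          (fun y => mul_nonneg (mul_nonneg (abs_nonneg _) (hgpos y).le) (hm y).le)
          hptw (hDg_sum.mul_left _)
      calc ∑' y, |u y| * g y * m y ≤ ∑' y, sqB * (D y * (g y * m y)) :=
            Summable.tsum_le_tsum hptw hsumL (hDg_sum.mul_left _)
        _ = sqB * ∑' y, D y * (g y * m y) := tsum_mul_left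
        _ ≤ sqB * 1 := mul_le_mul_of_nonneg_left htsumD hsqB0
        _ = sqB := mul_one _
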